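/- Let g₀, g₁, …, g_{m−1} : ℝⁿ → ℝ be convex functions that are continuously differentiable everywhere, let g(x) := Σ_{i=0}^{m−1} g_i(x), and assume g attains an unconstrained (global) minimum. Let (σ_k)_{k≥0} be positive reals with lim_{k→∞} σ_k = 0, Σ_{k=0}^∞ σ_k = +∞, and lim_{k→∞} σ_{km+j}/σ_{km} = 1 for all 1 ≤ j ≤ m−1 (m-steering parameters). From an arbitrary x⁰ ∈ ℝⁿ, generate x^{k+1} = x^k − σ_k·∇g_{i(k)}(x^k) with cyclic control i(k) = k mod m. If the sequence (x^k)_{k≥0} is bounded, then g(x^k) converges to the minimum value of g; if, in addition, g has a unique minimizer, then (x^k)_{k≥0} converges to this minimizer. -/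

import Mathlib

open Filter InnerProductSpace

variable {E : Type*} [NormedAddCommGroup E] [InnerProductSpace ℝ E] [CompleteSpace E]

lemma inner_gradient_apply (f : E → ℝ) (x v : E) :
    ⟪gradient f x, v⟫_ℝ = fderiv ℝ f x v := toDual_symm_apply

lemma grad_ineq {f : E → ℝ} (hc : ConvexOn ℝ Set.univ f) (hd : ContDiff ℝ 1 f) (x y : E) :
    f x + ⟪gradient f x, y - x⟫_ℝ ≤ f y := by
  set v := y - x with hv
  have hdiff : ∀ z : E, DifferentiableAt ℝ f z := fun z => hd.differentiable one_ne_zero z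
  set φ : ℝ → ℝ := fun t => f (x + t • v) with hφ
  have hline : ∀ t : ℝ, HasDerivAt (fun s : ℝ => x + s • v) v t := by
    intro t
    simpa using ((hasDerivAt_id t).smul_const v).const_add x
  have hder : HasDerivAt φ (fderiv ℝ f x v) 0 := by
    have := (hdiff (x + (0:ℝ) • v)).hasFDerivAt.comp_hasDerivAt 0 (hline 0)
    simp at this; exact this
  have hφconv : ConvexOn ℝ Set.univ φ := by
    refine ⟨convex_univ, ?_⟩
    intro a _ b _ la lb hla hlb hlab
    have key : x + (la * a + lb * b) • v = la • (x + a • v) + lb • (x + b • v) := by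
      have hx : x = la • x + lb • x := by rw [← add_smul, hlab, one_smul]
      rw [add_smul, mul_smul, mul_smul, smul_add, smul_add]
      nth_rewrite 1 [hx]
      abel
    show f (x + (la • a + lb • b) • v) ≤ _
    rw [smul_eq_mul, smul_eq_mul, key]
    exact hc.2 (Set.mem_univ _) (Set.mem_univ _) hla hlb hlab
  have hslope := hφconv.le_slope_of_hasDerivAt (Set.mem_univ (0:ℝ)) (Set.mem_univ (1:ℝ))
    one_pos hder
  rw [inner_gradient_apply]
  have : slope φ 0 1 = f y - f x := by
    simp [slope, hφ, hv]
  rw [this] at hslope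
  linarith

lemma inner_tendsto_zero {a b : ℕ → E} (ha : Tendsto a atTop (nhds 0)) {B : ℝ}
    (hb : ∀ k, ‖b k‖ ≤ B) : Tendsto (fun k => ⟪a k, b k⟫_ℝ) atTop (nhds 0) := by
  have hB : 0 ≤ B := le_trans (norm_nonneg _) (hb 0)
  have hle : ∀ k, ‖⟪a k, b k⟫_ℝ‖ ≤ ‖a k‖ * B := fun k =>
    (abs_real_inner_le_norm _ _).trans (mul_le_mul_of_nonneg_left (hb k) (norm_nonneg _))
  have hlim : Tendsto (fun k => ‖a k‖ * B) atTop (nhds 0) := by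
    simpa using ha.norm.mul_const B
  exact squeeze_zero_norm hle hlim

lemma unif_seq {f : E → ℝ} (hd : ContDiff ℝ 1 f) {K : Set E} (hK : IsCompact K)
    {u w : ℕ → E} (hu : ∀ k, u k ∈ K) (hw : ∀ k, w k ∈ K)
    (hdist : Tendsto (fun k => ‖u k - w k‖) atTop (nhds 0)) :
    Tendsto (fun k => gradient f (u k) - gradient f (w k)) atTop (nhds 0) := by
  have hgc : Continuous (gradient f) := by
    have h1 : Continuous (fderiv ℝ f) := hd.continuous_fderiv one_ne_zero
    exact (InnerProductSpace.toDual ℝ E).symm.continuous.comp h1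
  have huc : UniformContinuousOn (gradient f) K :=
    hK.uniformContinuousOn_of_continuous hgc.continuousOn
  rw [Metric.uniformContinuousOn_iff] at huc
  rw [NormedAddCommGroup.tendsto_nhds_zero]
  intro ε hε
  obtain ⟨δ, hδ, hcl⟩ := huc ε hε
  have := (hdist.eventually (eventually_lt_nhds hδ))
  filter_upwards [this] with k hk
  have := hcl (u k) (hu k) (w k) (hw k) (by simpa [dist_eq_norm] using hk)
  simpa [dist_eq_norm] using this

set_option maxHeartbeats 2000000 in
lemma keyA (G : E → ℝ) (hc : ConvexOn ℝ Set.univ G) (hd : ContDiff ℝ 1 G)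
    (xs : E) (hxs : ∀ z, G xs ≤ G z)
    (K : Set E) (hK : IsCompact K)
    (y : ℕ → E) (hyK : ∀ k, y k ∈ K)
    (τ : ℕ → ℝ) (hτpos : ∀ k, 0 < τ k) (hτ0 : Tendsto τ atTop (nhds 0))
    (hτsum : Tendsto (fun N : ℕ => ∑ k ∈ Finset.range N, τ k) atTop atTop)
    (v : ℕ → E) (hrec : ∀ k, y (k + 1) = y k - τ k • v k)
    (hv : Tendsto (fun k => v k - gradient G (y k)) atTop (nhds 0)) :
    Tendsto (fun k => G (y k)) atTop (nhds (G xs)) := by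
  -- bound on gradient over K
  obtain ⟨M, hM⟩ := hK.exists_bound_of_continuousOn
    (((InnerProductSpace.toDual ℝ E).symm.continuous.comp (hd.continuous_fderiv one_ne_zero)).continuousOn :
      ContinuousOn (gradient G) K)
  have hM0 : 0 ≤ M := le_trans (norm_nonneg _) (hM _ (hyK 0))
  -- bound on v
  have hvB : ∃ B : ℝ, 0 ≤ B ∧ ∀ k, ‖v k‖ ≤ B := by
    obtain ⟨C, hC⟩ := (hv.norm.bddAbove_range).imp (fun C hC => hC)
    refine ⟨C + M, ?_, ?_⟩
    · have := le_trans (norm_nonneg _) (hC ⟨0, rfl⟩)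
      linarith
    · intro k
      have h1 : ‖v k - gradient G (y k)‖ ≤ C := hC ⟨k, rfl⟩
      have h2 : ‖gradient G (y k)‖ ≤ M := hM _ (hyK k)
      calc ‖v k‖ = ‖(v k - gradient G (y k)) + gradient G (y k)‖ := by
            rw [sub_add_cancel]
        _ ≤ ‖v k - gradient G (y k)‖ + ‖gradient G (y k)‖ := norm_add_le _ _
        _ ≤ C + M := add_le_add h1 h2
  obtain ⟨B, hB0, hB⟩ := hvB
  -- step lengths go to zero
  have hstep : Tendsto (fun k => ‖y (k + 1) - y k‖) atTop (nhds 0) := by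
    have hle : ∀ k, ‖y (k + 1) - y k‖ ≤ τ k * B := by
      intro k
      rw [hrec k]
      have : y k - τ k • v k - y k = -(τ k • v k) := by abel
      rw [this, norm_neg, norm_smul, Real.norm_eq_abs, abs_of_pos (hτpos k)]
      exact mul_le_mul_of_nonneg_left (hB k) (hτpos k).le
    refine squeeze_zero_norm (fun k => by simpa using hle k) ?_
    simpa using hτ0.mul_const B
  -- r k := inner ⟨∇G(y k+1), v k⟩ minus ‖∇G(y k)‖² tends to 0
  set c : ℕ → ℝ := fun k => ⟪gradient G (y (k + 1)), v k⟫_ℝ with hcdef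
  have hrtend : Tendsto (fun k => c k - ‖gradient G (y k)‖ ^ 2) atTop (nhds 0) := by
    have hsplit : ∀ k, c k - ‖gradient G (y k)‖ ^ 2 =
        ⟪gradient G (y (k + 1)) - gradient G (y k), v k⟫_ℝ +
        ⟪gradient G (y k), v k - gradient G (y k)⟫_ℝ := by
      intro k
      simp only [hcdef, inner_sub_left, inner_sub_right, real_inner_self_eq_norm_sq]
      ring
    have h1 : Tendsto (fun k => ⟪gradient G (y (k + 1)) - gradient G (y k), v k⟫_ℝ)
        atTop (nhds 0) :=
      inner_tendsto_zero (unif_seq hd hK (fun k => hyK (k + 1)) hyK hstep) hB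
    have h2 : Tendsto (fun k => ⟪gradient G (y k), v k - gradient G (y k)⟫_ℝ)
        atTop (nhds 0) := by
      have := inner_tendsto_zero (b := fun k => gradient G (y k)) hv (fun k => hM _ (hyK k))
      simpa [real_inner_comm] using this
    have := h1.add h2
    simp only [add_zero] at this
    exact Tendsto.congr (fun k => (hsplit k).symm) this
  -- descent inequality
  set δ : ℕ → ℝ := fun k => G (y k) - G xs with hδdef
  have hδ0 : ∀ k, 0 ≤ δ k := fun k => sub_nonneg.mpr (hxs _)
  have hdesc : ∀ k, δ (k + 1) ≤ δ k - τ k * c k := by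
    intro k
    have h := grad_ineq hc hd (y (k + 1)) (y k)
    have hyy : y k - y (k + 1) = τ k • v k := by rw [hrec k]; abel
    rw [hyy, real_inner_smul_right] at h
    simp only [hδdef]
    linarith
  have hcabs : ∀ k, |c k| ≤ M * B := by
    intro k
    calc |c k| ≤ ‖gradient G (y (k + 1))‖ * ‖v k‖ := abs_real_inner_le_norm _ _
      _ ≤ M * B := mul_le_mul (hM _ (hyK (k + 1))) (hB k) (norm_nonneg _) hM0
  -- lower bound on gradient norm away from the minimum
  have hmu : ∀ η : ℝ, 0 < η → ∃ μ : ℝ, 0 < μ ∧ ∀ z ∈ K, G xs + η ≤ G z → μ ≤ ‖gradient G z‖ := by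
    intro η hη
    by_cases hS : (K ∩ {z | G xs + η ≤ G z}).Nonempty
    · have hScl : IsClosed {z : E | G xs + η ≤ G z} :=
        isClosed_le continuous_const (hd.continuous)
      have hScomp : IsCompact (K ∩ {z | G xs + η ≤ G z}) := hK.inter_right hScl
      obtain ⟨z₀, hz₀S, hz₀min⟩ := hScomp.exists_isMinOn hS
        ((continuous_norm.comp
          ((InnerProductSpace.toDual ℝ E).symm.continuous.comp
            (hd.continuous_fderiv one_ne_zero))).continuousOn :
          ContinuousOn (fun z => ‖gradient G z‖) _)
      refine ⟨‖gradient G z₀‖, ?_, fun z hz hGz => hz₀min ⟨hz, hGz⟩⟩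
      rcases eq_or_lt_of_le (norm_nonneg (gradient G z₀)) with h0 | h0
      · exfalso
        have hg0 : gradient G z₀ = 0 := by
          have := h0.symm
          simpa [norm_eq_zero] using this
        have := grad_ineq hc hd z₀ xs
        rw [hg0] at this
        simp only [inner_zero_left, add_zero] at this
        have hz₀ : G xs + η ≤ G z₀ := hz₀S.2
        linarith
      · exact h0
    · exact ⟨1, one_pos, fun z hz hGz => absurd ⟨hz, hGz⟩ (fun h => hS ⟨z, h⟩)⟩
  -- Step A : δ is frequently below any positive threshold
  have stepA : ∀ η : ℝ, 0 < η → ∃ᶠ k in atTop, δ k < η := by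
    intro η hη
    by_contra hcon
    rw [not_frequently] at hcon
    simp only [not_lt] at hcon
    rw [eventually_atTop] at hcon
    obtain ⟨N, hN⟩ := hcon
    obtain ⟨μ, hμpos, hμ⟩ := hmu η hη
    have hev : ∀ᶠ k in atTop, |c k - ‖gradient G (y k)‖ ^ 2| < μ ^ 2 / 2 := by
      have := hrtend.eventually (eventually_lt_nhds (show (0:ℝ) < μ ^ 2 / 2 by positivity))
      have habs := hrtend.abs
      simp only [abs_zero] at habs
      exact habs.eventually (eventually_lt_nhds (show (0:ℝ) < μ ^ 2 / 2 by positivity))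
    rw [eventually_atTop] at hev
    obtain ⟨N₁, hN₁⟩ := hev
    set N' := max N N₁ with hN'def
    have hdesc2 : ∀ k, N' ≤ k → δ (k + 1) ≤ δ k - τ k * (μ ^ 2 / 2) := by
      intro k hk
      have hk1 : N ≤ k := le_trans (le_max_left _ _) hk
      have hk2 : N₁ ≤ k := le_trans (le_max_right _ _) hk
      have hyS : G xs + η ≤ G (y k) := by have := hN k hk1; simp only [hδdef] at this; linarith
      have hgl : μ ≤ ‖gradient G (y k)‖ := hμ _ (hyK k) hyS
      have hck : μ ^ 2 / 2 ≤ c k := by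
        have h1 := hN₁ k hk2
        have h2 : μ ^ 2 ≤ ‖gradient G (y k)‖ ^ 2 := by nlinarith [norm_nonneg (gradient G (y k))]
        have h3 := abs_lt.mp h1
        linarith [h3.1]
      have hd1 := hdesc k
      have hτk := (hτpos k).le
      have h5 : τ k * (μ ^ 2 / 2) ≤ τ k * c k := mul_le_mul_of_nonneg_left hck hτk
      exact hd1.trans (sub_le_sub_left h5 _)
    have hind : ∀ p : ℕ, δ (N' + p) ≤ δ N' - μ ^ 2 / 2 * (∑ i ∈ Finset.range p, τ (N' + i)) := by
      intro p
      induction p with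
      | zero => simp
      | succ q ih =>
        have := hdesc2 (N' + q) (Nat.le_add_right _ _)
        rw [Finset.sum_range_succ]
        have : δ (N' + q + 1) ≤ δ (N' + q) - τ (N' + q) * (μ ^ 2 / 2) := this
        have heq : N' + (q + 1) = N' + q + 1 := by ring
        rw [heq]
        linarith
    have htail : Tendsto (fun p : ℕ => ∑ i ∈ Finset.range p, τ (N' + i)) atTop atTop := by
      have hshift : ∀ p : ℕ, ∑ i ∈ Finset.range p, τ (N' + i) =
          (∑ k ∈ Finset.range (N' + p), τ k) - ∑ k ∈ Finset.range N', τ k := by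
        intro p
        rw [Finset.sum_range_add]
        ring
      have h1 : Tendsto (fun p : ℕ => ∑ k ∈ Finset.range (N' + p), τ k) atTop atTop := by
        have hmono : Tendsto (fun p : ℕ => N' + p) atTop atTop :=
          tendsto_atTop_mono (fun p => Nat.le_add_left p N') tendsto_id
        exact hτsum.comp hmono
      have h2 := tendsto_atTop_add_const_right atTop (-(∑ k ∈ Finset.range N', τ k)) h1
      refine Tendsto.congr (fun p => ?_) h2
      rw [hshift p]; ring
    have hbig : ∃ p, δ N' / (μ ^ 2 / 2) < ∑ i ∈ Finset.range p, τ (N' + i) :=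
      (htail.eventually_gt_atTop _).exists
    obtain ⟨p, hp⟩ := hbig
    have hlt : δ N' - μ ^ 2 / 2 * (∑ i ∈ Finset.range p, τ (N' + i)) < 0 := by
      have hμ2 : (0:ℝ) < μ ^ 2 / 2 := by positivity
      rw [div_lt_iff₀ hμ2] at hp
      nlinarith
    exact (lt_irrefl (0 : ℝ)) (lt_of_le_of_lt ((hδ0 (N' + p)).trans (hind p)) hlt)
  -- Step B : δ is eventually below 2η
  have stepB : ∀ η : ℝ, 0 < η → ∀ᶠ k in atTop, δ k ≤ 2 * η := by
    intro η hη
    obtain ⟨μ, hμpos, hμ⟩ := hmu η hη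
    have hev1 : ∀ᶠ k in atTop, |c k - ‖gradient G (y k)‖ ^ 2| < μ ^ 2 / 2 := by
      have habs := hrtend.abs
      simp only [abs_zero] at habs
      exact habs.eventually (eventually_lt_nhds (show (0:ℝ) < μ ^ 2 / 2 by positivity))
    have hev2 : ∀ᶠ k in atTop, τ k * (M * B) < η := by
      have := hτ0.mul_const (M * B)
      simp only [zero_mul] at this
      exact this.eventually (eventually_lt_nhds hη)
    rw [eventually_atTop] at hev1 hev2
    obtain ⟨N₁, hN₁⟩ := hev1
    obtain ⟨N₂, hN₂⟩ := hev2
    obtain ⟨k₀, hk₀ge, hk₀⟩ := ((stepA η hη).and_eventually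
      (eventually_ge_atTop (max N₁ N₂))).exists
    have hinv : ∀ p : ℕ, δ (k₀ + p) ≤ 2 * η := by
      intro p
      induction p with
      | zero => simpa using le_trans hk₀ge.le (by linarith)
      | succ q ih =>
        set k := k₀ + q with hkdef
        have hkN₁ : N₁ ≤ k := le_trans (le_trans (le_max_left _ _) hk₀) (Nat.le_add_right _ _)
        have hkN₂ : N₂ ≤ k := le_trans (le_trans (le_max_right _ _) hk₀) (Nat.le_add_right _ _)
        have heq : k₀ + (q + 1) = k + 1 := by rw [hkdef]; omega
        rw [heq]
        rcases le_or_gt η (δ k) with hcase | hcase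
        · -- gradient big, function value decreases
          have hyS : G xs + η ≤ G (y k) := by simp only [hδdef] at hcase; linarith
          have hgl : μ ≤ ‖gradient G (y k)‖ := hμ _ (hyK k) hyS
          have hck : 0 ≤ c k := by
            have h1 := hN₁ k hkN₁
            have h2 : μ ^ 2 ≤ ‖gradient G (y k)‖ ^ 2 := by
              nlinarith [norm_nonneg (gradient G (y k))]
            have h3 := abs_lt.mp h1
            nlinarith [h3.1]
          have := hdesc k
          nlinarith [(hτpos k).le, mul_nonneg (hτpos k).le hck]
        · -- function value may grow, but only a little
          have h1 := hdesc k
          have h2 : |τ k * c k| ≤ τ k * (M * B) := by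
            rw [abs_mul, abs_of_pos (hτpos k)]
            exact mul_le_mul_of_nonneg_left (hcabs k) (hτpos k).le
          have h3 := abs_le.mp h2
          have h4 := hN₂ k hkN₂
          linarith [h3.1]
    rw [eventually_atTop]
    refine ⟨k₀, fun k hk => ?_⟩
    have : k = k₀ + (k - k₀) := by omega
    rw [this]
    exact hinv _
  -- conclude
  have hδtend : Tendsto δ atTop (nhds 0) := by
    rw [NormedAddCommGroup.tendsto_nhds_zero]
    intro ε hε
    filter_upwards [stepB (ε / 3) (by linarith)] with k hk
    rw [Real.norm_eq_abs, abs_of_nonneg (hδ0 k)]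
    exact hk.trans_lt (by linarith)
  have := hδtend.add_const (G xs)
  simp only [zero_add] at this
  exact Tendsto.congr (fun k => by simp [hδdef]) this

lemma unif_seq' {F : Type*} [NormedAddCommGroup F] (f : E → F) (hf : Continuous f)
    {K : Set E} (hK : IsCompact K)
    {u w : ℕ → E} (hu : ∀ k, u k ∈ K) (hw : ∀ k, w k ∈ K)
    (hdist : Tendsto (fun k => ‖u k - w k‖) atTop (nhds 0)) :
    Tendsto (fun k => f (u k) - f (w k)) atTop (nhds 0) := by
  have huc : UniformContinuousOn f K := hK.uniformContinuousOn_of_continuous hf.continuousOn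
  rw [Metric.uniformContinuousOn_iff] at huc
  rw [NormedAddCommGroup.tendsto_nhds_zero]
  intro ε hε
  obtain ⟨δ, hδ, hcl⟩ := huc ε hε
  filter_upwards [hdist.eventually (eventually_lt_nhds hδ)] with k hk
  have := hcl (u k) (hu k) (w k) (hw k) (by simpa [dist_eq_norm] using hk)
  simpa [dist_eq_norm] using this

lemma smul_tendsto_zero {r : ℕ → ℝ} (hr : Tendsto r atTop (nhds 0)) {w : ℕ → E} {C : ℝ}
    (hw : ∀ k, ‖w k‖ ≤ C) : Tendsto (fun k => r k • w k) atTop (nhds 0) := by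
  have hC : 0 ≤ C := le_trans (norm_nonneg _) (hw 0)
  have hle : ∀ k, ‖r k • w k‖ ≤ ‖r k‖ * C := by
    intro k
    rw [norm_smul]
    exact mul_le_mul_of_nonneg_left (hw k) (norm_nonneg _)
  have hlim : Tendsto (fun k => ‖r k‖ * C) atTop (nhds 0) := by
    simpa using hr.norm.mul_const C
  exact squeeze_zero_norm hle hlim

lemma gradient_sum {ι : Type*} (s : Finset ι) (f : ι → E → ℝ) (z : E)
    (hf : ∀ i ∈ s, DifferentiableAt ℝ (f i) z) :
    gradient (fun x => ∑ i ∈ s, f i x) z = ∑ i ∈ s, gradient (f i) z := by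
  unfold gradient
  rw [fderiv_fun_sum hf, map_sum]

lemma convexOn_finset_sum {ι : Type*} (s : Finset ι) (f : ι → E → ℝ)
    (hf : ∀ i ∈ s, ConvexOn ℝ Set.univ (f i)) :
    ConvexOn ℝ Set.univ (fun x => ∑ i ∈ s, f i x) := by
  classical
  induction s using Finset.cons_induction with
  | empty => simpa using convexOn_const (0 : ℝ) convex_univ
  | cons i t hit ih =>
    simp only [Finset.sum_cons]
    exact (hf i (Finset.mem_cons_self i t)).add
      (ih (fun j hj => hf j (Finset.mem_cons_of_mem hj)))

set_option maxHeartbeats 2000000 in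
/-- Censor–De Pierro–Zaknoon: the m-steered cyclic gradient method.  If the generated
sequence is bounded, then `g(x^k)` converges to the minimum of `g = Σ gᵢ`; if moreover the
minimizer of `g` is unique, the sequence `(x^k)` converges to it. -/
theorem stmt13 {n m : ℕ} [NeZero m]
    (g : Fin m → EuclideanSpace ℝ (Fin n) → ℝ)
    (hconv : ∀ i, ConvexOn ℝ Set.univ (g i))
    (hdiff : ∀ i, ContDiff ℝ 1 (g i))
    (G : EuclideanSpace ℝ (Fin n) → ℝ) (hG : G = fun x => ∑ i, g i x)
    (hmin : ∃ xs : EuclideanSpace ℝ (Fin n), ∀ y, G xs ≤ G y)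
    (σ : ℕ → ℝ) (hσpos : ∀ k, 0 < σ k)
    (hσ0 : Tendsto σ atTop (nhds 0))
    (hσsum : Tendsto (fun K : ℕ => ∑ k ∈ Finset.range K, σ k) atTop atTop)
    (hσsteer : ∀ j : ℕ, 1 ≤ j → j ≤ m - 1 →
      Tendsto (fun k : ℕ => σ (k * m + j) / σ (k * m)) atTop (nhds 1))
    (x : ℕ → EuclideanSpace ℝ (Fin n))
    (hx : ∀ k : ℕ, x (k + 1) = x k -
      σ k • gradient (g ⟨k % m, Nat.mod_lt k (Nat.pos_of_ne_zero (NeZero.ne m))⟩) (x k))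
    (hbdd : Bornology.IsBounded (Set.range x)) :
    (∀ xs : EuclideanSpace ℝ (Fin n), (∀ y, G xs ≤ G y) →
      Tendsto (fun k : ℕ => G (x k)) atTop (nhds (G xs))) ∧
    (∀ xs : EuclideanSpace ℝ (Fin n), (∀ y, G xs ≤ G y) →
      (∀ z : EuclideanSpace ℝ (Fin n), (∀ y, G z ≤ G y) → z = xs) →
      Tendsto x atTop (nhds xs)) := by
  have hm : 0 < m := Nat.pos_of_ne_zero (NeZero.ne m)
  -- the compact set containing all iterates
  set K : Set (EuclideanSpace ℝ (Fin n)) := closure (Set.range x) with hKdef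
  have hKcomp : IsCompact K := hbdd.isCompact_closure
  have hxK : ∀ t, x t ∈ K := fun t => subset_closure ⟨t, rfl⟩
  -- properties of G
  have hGconv : ConvexOn ℝ Set.univ G := by
    rw [hG]; exact convexOn_finset_sum Finset.univ g (fun i _ => hconv i)
  have hGdiff : ContDiff ℝ 1 G := by
    rw [hG]; exact ContDiff.sum (fun i _ => hdiff i)
  have hGgrad : ∀ z : EuclideanSpace ℝ (Fin n), gradient G z = ∑ i : Fin m, gradient (g i) z := by
    intro z
    rw [hG]
    exact gradient_sum Finset.univ g z
      (fun i _ => ((hdiff i).differentiable one_ne_zero).differentiableAt)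
  -- uniform bound on gradients of the pieces over K
  have hgradcont : ∀ i : Fin m, Continuous (gradient (g i)) := fun i =>
    (InnerProductSpace.toDual ℝ (EuclideanSpace ℝ (Fin n))).symm.continuous.comp
      ((hdiff i).continuous_fderiv one_ne_zero)
  obtain ⟨C, hC0, hC⟩ : ∃ C : ℝ, 0 ≤ C ∧ ∀ (i : Fin m), ∀ z ∈ K, ‖gradient (g i) z‖ ≤ C := by
    obtain ⟨C, hC⟩ := hKcomp.exists_bound_of_continuousOn
      (f := fun z => ∑ i : Fin m, (‖gradient (g i) z‖ : ℝ))
      (Continuous.continuousOn (by continuity))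
    have hkey : ∀ z ∈ K, ∀ i : Fin m, ‖gradient (g i) z‖ ≤ C := by
      intro z hz i
      have h1 := hC z hz
      have h2 : (0:ℝ) ≤ ∑ i : Fin m, ‖gradient (g i) z‖ :=
        Finset.sum_nonneg (fun i _ => norm_nonneg _)
      rw [Real.norm_of_nonneg h2] at h1
      have h3 : ‖gradient (g i) z‖ ≤ ∑ i : Fin m, ‖gradient (g i) z‖ :=
        Finset.single_le_sum (f := fun j : Fin m => ‖gradient (g j) z‖)
          (fun j _ => norm_nonneg _) (Finset.mem_univ i)
      linarith
    exact ⟨C, le_trans (norm_nonneg _) (hkey (x 0) (hxK 0) ⟨0, hm⟩), fun i z hz => hkey z hz i⟩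
  -- iterate recursion over blocks
  have hcycle : ∀ a b : ℕ, x (a + b) = x a -
      ∑ l ∈ Finset.range b, σ (a + l) •
        gradient (g ⟨(a + l) % m, Nat.mod_lt _ hm⟩) (x (a + l)) := by
    intro a b
    induction b with
    | zero => simp
    | succ b ih =>
      calc x (a + (b + 1)) = x ((a + b) + 1) := by rw [← Nat.add_assoc]
        _ = x (a + b) - σ (a + b) •
            gradient (g ⟨(a + b) % m, Nat.mod_lt _ hm⟩) (x (a + b)) := hx _
        _ = _ := by rw [Finset.sum_range_succ]; nth_rewrite 1 [ih]; abel
  -- iterate displacement bound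
  have hdisp : ∀ a b : ℕ, ‖x (a + b) - x a‖ ≤ ∑ l ∈ Finset.range b, σ (a + l) * C := by
    intro a b
    induction b with
    | zero => simp
    | succ b ih =>
      have h1 : x (a + (b + 1)) - x a = (x ((a + b) + 1) - x (a + b)) + (x (a + b) - x a) := by
        rw [← Nat.add_assoc]; abel
      rw [h1, Finset.sum_range_succ]
      refine le_trans (norm_add_le _ _) ?_
      have h2 : ‖x ((a + b) + 1) - x (a + b)‖ ≤ σ (a + b) * C := by
        rw [hx (a + b)]
        have : x (a + b) - σ (a + b) •
            gradient (g ⟨(a + b) % m, Nat.mod_lt _ hm⟩) (x (a + b)) - x (a + b) =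
            -(σ (a + b) • gradient (g ⟨(a + b) % m, Nat.mod_lt _ hm⟩) (x (a + b))) := by abel
        rw [this, norm_neg, norm_smul, Real.norm_eq_abs, abs_of_pos (hσpos _)]
        exact mul_le_mul_of_nonneg_left (hC _ _ (hxK _)) (hσpos _).le
      linarith
  -- block sequences
  set y : ℕ → EuclideanSpace ℝ (Fin n) := fun k => x (k * m) with hydef
  set τ : ℕ → ℝ := fun k => σ (k * m) with hτdef
  set v : ℕ → EuclideanSpace ℝ (Fin n) := fun k =>
    (σ (k * m))⁻¹ • ∑ j : Fin m, σ (k * m + ↑j) • gradient (g j) (x (k * m + ↑j)) with hvdef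
  have hSfin : ∀ k : ℕ, ∑ l ∈ Finset.range m, σ (k * m + l) •
      gradient (g ⟨(k * m + l) % m, Nat.mod_lt _ hm⟩) (x (k * m + l)) =
      ∑ j : Fin m, σ (k * m + ↑j) • gradient (g j) (x (k * m + ↑j)) := by
    intro k
    rw [← Fin.sum_univ_eq_sum_range (fun l => σ (k * m + l) •
      gradient (g ⟨(k * m + l) % m, Nat.mod_lt _ hm⟩) (x (k * m + l))) m]
    refine Finset.sum_congr rfl (fun j _ => ?_)
    have hfin : (⟨(k * m + ↑j) % m, Nat.mod_lt _ hm⟩ : Fin m) = j := by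
      apply Fin.ext
      show (k * m + ↑j) % m = ↑j
      rw [Nat.mul_comm, Nat.mul_add_mod]
      exact Nat.mod_eq_of_lt j.isLt
    rw [hfin]
  have hrec : ∀ k : ℕ, y (k + 1) = y k - τ k • v k := by
    intro k
    have hτv : τ k • v k = ∑ j : Fin m, σ (k * m + ↑j) • gradient (g j) (x (k * m + ↑j)) := by
      rw [hτdef, hvdef]
      exact smul_inv_smul₀ (hσpos (k * m)).ne' _
    have hidx : (k + 1) * m = k * m + m := by ring
    rw [hτv]
    show x ((k + 1) * m) = x (k * m) - _
    rw [hidx, hcycle (k * m) m, hSfin k]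
  have hyK : ∀ k, y k ∈ K := fun k => hxK _
  have hτpos' : ∀ k, 0 < τ k := fun k => hσpos _
  have hmul_atTop : ∀ l : ℕ, Tendsto (fun k : ℕ => k * m + l) atTop atTop := by
    intro l
    refine tendsto_atTop_mono (fun k => ?_) tendsto_id
    have : k ≤ k * m := Nat.le_mul_of_pos_right k hm
    show k ≤ k * m + l
    omega
  have hτ0' : Tendsto τ atTop (nhds 0) := by
    have := hσ0.comp (hmul_atTop 0)
    refine Tendsto.congr (fun k => ?_) this
    simp [hτdef]
  have hratio : ∀ j : ℕ, j < m →
      Tendsto (fun k : ℕ => σ (k * m + j) / σ (k * m)) atTop (nhds 1) := by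
    intro j hj
    rcases Nat.eq_zero_or_pos j with rfl | hj1
    · refine Tendsto.congr (fun k => ?_) tendsto_const_nhds
      rw [Nat.add_zero]
      exact (div_self (hσpos (k * m)).ne').symm
    · exact hσsteer j hj1 (by omega)
  have hdisp0 : ∀ j : ℕ, j ≤ m →
      Tendsto (fun k : ℕ => ‖x (k * m + j) - x (k * m)‖) atTop (nhds 0) := by
    intro j hj
    have hlim : Tendsto (fun k : ℕ => ∑ l ∈ Finset.range j, σ (k * m + l) * C)
        atTop (nhds 0) := by
      have hterm : ∀ l ∈ Finset.range j, Tendsto (fun k : ℕ => σ (k * m + l) * C)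
          atTop (nhds 0) := by
        intro l _
        simpa using (hσ0.comp (hmul_atTop l)).mul_const C
      simpa using tendsto_finset_sum (Finset.range j) hterm
    refine squeeze_zero_norm (fun k => ?_) hlim
    rw [norm_norm]
    exact hdisp (k * m) j
  -- the error in the aggregated gradient direction tends to zero
  have hv : Tendsto (fun k => v k - gradient G (y k)) atTop (nhds 0) := by
    have hsplit : ∀ k, v k - gradient G (y k) =
        ∑ j : Fin m, ((σ (k * m + ↑j) / σ (k * m) - 1) • gradient (g j) (x (k * m + ↑j))
          + (gradient (g j) (x (k * m + ↑j)) - gradient (g j) (x (k * m)))) := by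
      intro k
      simp only [hvdef, hydef]
      rw [hGgrad, Finset.smul_sum, ← Finset.sum_sub_distrib]
      refine Finset.sum_congr rfl (fun j _ => ?_)
      rw [smul_smul, sub_smul, one_smul, div_eq_inv_mul]
      abel
    have hz : (0 : EuclideanSpace ℝ (Fin n)) = ∑ _j : Fin m, (0 : EuclideanSpace ℝ (Fin n)) := by
      simp
    rw [hz]
    refine Tendsto.congr (fun k => (hsplit k).symm)
      (tendsto_finset_sum _ (fun j _ => ?_))
    have h1 : Tendsto (fun k : ℕ =>
        (σ (k * m + ↑j) / σ (k * m) - 1) • gradient (g j) (x (k * m + ↑j)))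
        atTop (nhds 0) := by
      refine smul_tendsto_zero ?_ (fun k => hC j _ (hxK _))
      have := (hratio ↑j j.isLt).sub_const 1
      simpa using this
    have h2 : Tendsto (fun k : ℕ =>
        gradient (g j) (x (k * m + ↑j)) - gradient (g j) (x (k * m)))
        atTop (nhds 0) :=
      unif_seq' (gradient (g j)) (hgradcont j) hKcomp (fun k => hxK _) (fun k => hxK _)
        (hdisp0 ↑j j.isLt.le)
    simpa using h1.add h2
  -- divergence of the block stepsizes
  have hτsum' : Tendsto (fun N : ℕ => ∑ k ∈ Finset.range N, τ k) atTop atTop := by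
    have hev : ∀ᶠ k : ℕ in atTop, ∀ j ∈ Finset.range m, σ (k * m + j) ≤ 2 * σ (k * m) := by
      rw [Filter.eventually_all_finset]
      intro j hj
      have hjm : j < m := Finset.mem_range.mp hj
      have := (hratio j hjm).eventually (eventually_le_nhds (show (1:ℝ) < 2 by norm_num))
      filter_upwards [this] with k hk
      have hpos := hσpos (k * m)
      rw [div_le_iff₀ hpos] at hk
      linarith
    rw [eventually_atTop] at hev
    obtain ⟨K₀, hK₀⟩ := hev
    have hsplitsum : ∀ N : ℕ, ∑ t ∈ Finset.range (N * m), σ t =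
        ∑ k ∈ Finset.range N, ∑ j ∈ Finset.range m, σ (k * m + j) := by
      intro N
      induction N with
      | zero => simp
      | succ N ih =>
        have hNm : (N + 1) * m = N * m + m := by ring
        rw [hNm, Finset.sum_range_add, ih, Finset.sum_range_succ]
    set A : ℝ := ∑ t ∈ Finset.range (K₀ * m), σ t with hAdef
    have hlow : ∀ N : ℕ, K₀ ≤ N → ∑ t ∈ Finset.range (N * m), σ t ≤
        A + (2 * m) * ∑ k ∈ Finset.range N, τ k := by
      intro N hN
      obtain ⟨p, rfl⟩ : ∃ p, N = K₀ + p := ⟨N - K₀, by omega⟩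
      rw [hsplitsum, Finset.sum_range_add, hAdef, hsplitsum]
      have hB : ∑ k ∈ Finset.range (K₀ + p), τ k =
          (∑ k ∈ Finset.range K₀, τ k) + ∑ i ∈ Finset.range p, τ (K₀ + i) :=
        Finset.sum_range_add _ _ _
      have hBpos : 0 ≤ ∑ k ∈ Finset.range K₀, τ k :=
        Finset.sum_nonneg (fun k _ => (hτpos' k).le)
      have hterm : ∀ i ∈ Finset.range p,
          ∑ j ∈ Finset.range m, σ ((K₀ + i) * m + j) ≤ (2 * m) * τ (K₀ + i) := by
        intro i _
        calc ∑ j ∈ Finset.range m, σ ((K₀ + i) * m + j)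
            ≤ ∑ j ∈ Finset.range m, 2 * σ ((K₀ + i) * m) :=
              Finset.sum_le_sum (fun j hj => hK₀ (K₀ + i) (Nat.le_add_right _ _) j hj)
          _ = (2 * m) * τ (K₀ + i) := by
              rw [Finset.sum_const, Finset.card_range, nsmul_eq_mul, hτdef]
              ring
      have h2 : ∑ i ∈ Finset.range p, ∑ j ∈ Finset.range m, σ ((K₀ + i) * m + j) ≤
          (2 * m) * ∑ i ∈ Finset.range p, τ (K₀ + i) := by
        rw [Finset.mul_sum]
        exact Finset.sum_le_sum hterm
      have hm2 : (0:ℝ) ≤ 2 * m := by positivity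
      rw [hB]
      nlinarith [mul_nonneg hm2 hBpos]
    have hS : Tendsto (fun N : ℕ => ∑ t ∈ Finset.range (N * m), σ t) atTop atTop := by
      refine hσsum.comp (tendsto_atTop_mono (fun N => ?_) tendsto_id)
      exact Nat.le_mul_of_pos_right N hm
    have hSd : Tendsto (fun N : ℕ => ((∑ t ∈ Finset.range (N * m), σ t) - A) / (2 * m))
        atTop atTop := by
      refine Tendsto.atTop_div_const (by positivity) ?_
      exact tendsto_atTop_add_const_right atTop (-A) hS
    refine tendsto_atTop_mono' atTop ?_ hSd
    filter_upwards [eventually_ge_atTop K₀] with N hN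
    have := hlow N hN
    rw [div_le_iff₀ (show (0:ℝ) < 2 * m by positivity)]
    nlinarith
  -- Part 1
  have hydiv : Tendsto (fun t : ℕ => t / m) atTop atTop := by
    rw [tendsto_atTop]
    intro b
    rw [eventually_atTop]
    exact ⟨b * m, fun t ht => (Nat.le_div_iff_mul_le hm).mpr ht⟩
  have hpart1 : ∀ xs : EuclideanSpace ℝ (Fin n), (∀ z, G xs ≤ G z) →
      Tendsto (fun t : ℕ => G (x t)) atTop (nhds (G xs)) := by
    intro xs hxs
    have hmain : Tendsto (fun k => G (y k)) atTop (nhds (G xs)) :=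
      keyA G hGconv hGdiff xs hxs K hKcomp y hyK τ hτpos' hτ0' hτsum' v hrec hv
    have hG1 : Tendsto (fun t : ℕ => G (x (t / m * m))) atTop (nhds (G xs)) := by
      have := hmain.comp hydiv
      refine Tendsto.congr (fun t => ?_) this
      simp [hydef]
    have hG2 : Tendsto (fun t : ℕ => G (x t) - G (x (t / m * m))) atTop (nhds 0) := by
      refine unif_seq' G hGdiff.continuous hKcomp (fun t => hxK t) (fun t => hxK _) ?_
      have hb : ∀ t : ℕ, ‖x t - x (t / m * m)‖ ≤
          ∑ l ∈ Finset.range m, σ (t / m * m + l) * C := by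
        intro t
        have hmod : t / m * m + t % m = t := Nat.div_add_mod' t m
        calc ‖x t - x (t / m * m)‖ = ‖x (t / m * m + t % m) - x (t / m * m)‖ := by rw [hmod]
          _ ≤ ∑ l ∈ Finset.range (t % m), σ (t / m * m + l) * C := hdisp _ _
          _ ≤ ∑ l ∈ Finset.range m, σ (t / m * m + l) * C := by
              refine Finset.sum_le_sum_of_subset_of_nonneg
                (Finset.range_subset_range.mpr (Nat.mod_lt t hm).le)
                (fun l _ _ => mul_nonneg (hσpos _).le hC0)
      have hψ : Tendsto (fun t : ℕ => ∑ l ∈ Finset.range m, σ (t / m * m + l) * C)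
          atTop (nhds 0) := by
        have hterm : ∀ l ∈ Finset.range m,
            Tendsto (fun t : ℕ => σ (t / m * m + l) * C) atTop (nhds 0) := by
          intro l _
          simpa using ((hσ0.comp ((hmul_atTop l).comp hydiv)).mul_const C)
        simpa using tendsto_finset_sum (Finset.range m) hterm
      exact squeeze_zero_norm (fun t => by rw [norm_norm]; exact hb t) hψ
    have := hG2.add hG1
    rw [zero_add] at this
    exact Tendsto.congr (fun t => by ring) this
  refine ⟨hpart1, ?_⟩
  -- Part 2
  intro xs hxs huniq
  by_contra hnot
  rw [Metric.tendsto_atTop] at hnot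
  push_neg at hnot
  obtain ⟨ε, hε, hfreq⟩ := hnot
  have hfreq' : ∃ᶠ t in atTop, x t ∈ (Set.range x ∩ {z | ε ≤ dist z xs}) := by
    rw [frequently_atTop]
    intro N
    obtain ⟨t, ht, hd⟩ := hfreq N
    exact ⟨t, ht, ⟨t, rfl⟩, hd⟩
  have hsbdd : Bornology.IsBounded (Set.range x ∩ {z | ε ≤ dist z xs}) :=
    hbdd.subset Set.inter_subset_left
  obtain ⟨a, ha, φ, hφmono, hφtend⟩ := tendsto_subseq_of_frequently_bounded hsbdd hfreq'
  have haK : ε ≤ dist a xs := by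
    have hclosed : IsClosed {z : EuclideanSpace ℝ (Fin n) | ε ≤ dist z xs} :=
      isClosed_le continuous_const (continuous_id.dist continuous_const)
    have hsub : closure (Set.range x ∩ {z | ε ≤ dist z xs}) ⊆ {z | ε ≤ dist z xs} := by
      refine closure_minimal Set.inter_subset_right hclosed
    exact hsub ha
  have hGa : Tendsto (fun i => G (x (φ i))) atTop (nhds (G a)) :=
    (hGdiff.continuous.tendsto a).comp hφtend
  have hGxs : Tendsto (fun i => G (x (φ i))) atTop (nhds (G xs)) :=
    (hpart1 xs hxs).comp hφmono.tendsto_atTop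
  have hGeq : G a = G xs := tendsto_nhds_unique hGa hGxs
  have hamin : ∀ z, G a ≤ G z := fun z => hGeq ▸ hxs z
  have haeq : a = xs := huniq a hamin
  rw [haeq, dist_self] at haK
  linarith
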